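/- For all integers d ≥ 1 and n ≥ d + 1, setting P_{n,d} := W_{n,d} · W_{n,d}ᵀ, one has P_{n,d} · W_{n,d} = n · W_{n,d} and P_{n,d} · W_{n,d−1}ᵀ = 0. -/

import Mathlib

open Matrix Polynomial

/-- `S(G)`: real symmetric matrices whose off-diagonal zero/nonzero pattern
matches the adjacency of `G`; the diagonal is unconstrained. -/
def Sset {V : Type*} [Fintype V] [DecidableEq V] (G : SimpleGraph V) : Set (Matrix V V ℝ) :=
  {M | M.IsSymm ∧ ∀ u v : V, u ≠ v → (M u v ≠ 0 ↔ G.Adj u v)}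

/-- `q(G)`: the minimum number of distinct eigenvalues over matrices in `S(G)`. -/
noncomputable def minQ {V : Type*} [Fintype V] [DecidableEq V] (G : SimpleGraph V) : ℕ :=
  sInf {k : ℕ | ∃ M ∈ Sset G, (spectrum ℝ M).ncard = k}

/-- The Johnson graph `J(n,d)`: vertices are the `d`-element subsets of an `n`-set,
adjacent iff their symmetric difference has two elements. -/
def Johnson (n d : ℕ) : SimpleGraph {s : Finset (Fin n) // s.card = d} where
  Adj α β := (symmDiff α.1 β.1).card = 2
  symm := ⟨by intro a b h; simpa [symmDiff_comm] using h⟩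
  loopless := ⟨by intro a h; simp [symmDiff_self] at h⟩

/-- For `d`-subsets `α, β` with `α ∆ β = {i, j}`, `i < j`, this is
`h(α,β) = |{ℓ ∈ α ∩ β : i < ℓ < j}|`. -/
def hjExp {n : ℕ} (α β : Finset (Fin n)) : ℕ :=
  ((α ∩ β).filter (fun l => (∃ i ∈ symmDiff α β, i < l) ∧ ∃ j ∈ symmDiff α β, l < j)).card

/-- The signed adjacency matrix `A_{n,d}` of the Johnson graph `J(n,d)`:
`A(α,β) = (-1)^{h(α,β)}` when `|α ∆ β| = 2` and `0` otherwise. -/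
def Ajohnson (n d : ℕ) :
    Matrix {s : Finset (Fin n) // s.card = d} {s : Finset (Fin n) // s.card = d} ℝ :=
  fun α β => if (symmDiff α.1 β.1).card = 2 then (-1 : ℝ) ^ hjExp α.1 β.1 else 0

/-- The matrix `W_{n,d}`, rows indexed by `d`-subsets and columns by `(d+1)`-subsets of
an `n`-set: `W(α,β) = (-1)^{|{y ∈ β : y < x}|}` when `α ⊆ β` with `β \ α = {x}`, else `0`. -/
def Wj (n d : ℕ) :
    Matrix {s : Finset (Fin n) // s.card = d} {s : Finset (Fin n) // s.card = d + 1} ℝ :=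
  fun α β => if α.1 ⊆ β.1 then
      (-1 : ℝ) ^ ((β.1.filter (fun y => ∃ x ∈ β.1 \ α.1, y < x)).card)
    else 0

/-- `P_{n,d} := W_{n,d} · W_{n,d}ᵀ`. -/
noncomputable def Pj (n d : ℕ) := Wj n d * (Wj n d)ᵀ

-- value of W on an adjacent pair
lemma Wj_eq {n d : ℕ} (α : {s : Finset (Fin n) // s.card = d})
    (β : {s : Finset (Fin n) // s.card = d + 1}) (x : Fin n)
    (hx : x ∉ α.1) (hβ : β.1 = insert x α.1) :
    Wj n d α β = (-1 : ℝ) ^ ((β.1.filter (fun y => y < x)).card) := by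
  have hsub : α.1 ⊆ β.1 := hβ ▸ Finset.subset_insert _ _
  have hsd : β.1 \ α.1 = {x} := by
    rw [hβ]
    simp [Finset.insert_sdiff_of_notMem, Finset.sdiff_self, hx]
  rw [Wj, if_pos hsub]
  congr 2
  apply Finset.filter_congr
  intro y _
  rw [hsd]
  simp

lemma Wj_ne {n d : ℕ} (α : {s : Finset (Fin n) // s.card = d})
    (β : {s : Finset (Fin n) // s.card = d + 1}) (h : ¬ α.1 ⊆ β.1) :
    Wj n d α β = 0 := by rw [Wj, if_neg h]

lemma exists_insert_of_subset {n : ℕ} {α β : Finset (Fin n)}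
    (hc : β.card = α.card + 1) (h : α ⊆ β) : ∃ x, x ∉ α ∧ β = insert x α := by
  have h1 : (β \ α).card = 1 := by
    rw [Finset.card_sdiff_of_subset h, hc]; omega
  obtain ⟨x, hx⟩ := Finset.card_eq_one.mp h1
  have hxm : x ∈ β \ α := hx ▸ Finset.mem_singleton_self x
  refine ⟨x, (Finset.mem_sdiff.mp hxm).2, ?_⟩
  have := Finset.union_sdiff_of_subset h
  rw [hx] at this
  rw [← this, Finset.union_comm]; ext z; simp [or_comm]

-- key parity lemma
lemma key_parity {n : ℕ} (s : Finset (Fin n)) (x y : Fin n)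
    (hx : x ∉ s) (hy : y ∉ s) (hxy : x ≠ y) :
    Odd ((((insert x s).filter (fun z => z < x)).card
      + ((insert y s).filter (fun z => z < y)).card)
      + (((insert y (insert x s)).filter (fun z => z < x)).card
      + ((insert y (insert x s)).filter (fun z => z < y)).card)) := by
  have e1 : ((insert x s).filter (fun z => z < x)) = s.filter (fun z => z < x) := by
    rw [Finset.filter_insert, if_neg (lt_irrefl x)]
  have e3 : ((insert y s).filter (fun z => z < y)) = s.filter (fun z => z < y) := by
    rw [Finset.filter_insert, if_neg (lt_irrefl y)]
  have e2 : ((insert y (insert x s)).filter (fun z => z < y)).card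
      = (s.filter (fun z => z < y)).card + (if x < y then 1 else 0) := by
    rw [Finset.filter_insert, if_neg (lt_irrefl y), Finset.filter_insert]
    split_ifs with h
    · rw [Finset.card_insert_of_notMem (by simp [hx])]
    · rfl
  have e4 : ((insert y (insert x s)).filter (fun z => z < x)).card
      = (s.filter (fun z => z < x)).card + (if y < x then 1 else 0) := by
    have hcomm : insert y (insert x s) = insert x (insert y s) := by
      ext z; simp; try tauto
    rw [hcomm, Finset.filter_insert, if_neg (lt_irrefl x), Finset.filter_insert]
    split_ifs with h
    · rw [Finset.card_insert_of_notMem (by simp [hy])]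
    · rfl
  rw [e1, e3, e2, e4]
  rcases lt_or_gt_of_ne hxy with h | h
  · rw [if_pos h, if_neg (asymm h)]
    exact ⟨(s.filter (fun z => z < x)).card + (s.filter (fun z => z < y)).card, by ring⟩
  · rw [if_neg (asymm h), if_pos h]
    exact ⟨(s.filter (fun z => z < x)).card + (s.filter (fun z => z < y)).card, by ring⟩

lemma neg_one_pow_add_eq_zero {a b : ℕ} (h : Odd (a + b)) :
    (-1 : ℝ) ^ a + (-1 : ℝ) ^ b = 0 := by
  rcases Nat.even_or_odd a with ha | ha
  · have hb : Odd b := by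
      rcases Nat.even_or_odd b with hb | hb
      · exact absurd (ha.add hb) (by simpa using h)
      · exact hb
    rw [ha.neg_one_pow, hb.neg_one_pow]; ring
  · have hb : Even b := by
      rcases Nat.even_or_odd b with hb | hb
      · exact hb
      · exact absurd (ha.add_odd hb) (by simpa using h)
    rw [ha.neg_one_pow, hb.neg_one_pow]; ring

lemma lemA (n d : ℕ) : Wj n d * Wj n (d + 1) = 0 := by
  ext α γ
  rw [Matrix.mul_apply, Matrix.zero_apply]
  by_cases hs : α.1 ⊆ γ.1
  · -- γ \ α has two elements x, y
    have h2 : (γ.1 \ α.1).card = 2 := by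
      rw [Finset.card_sdiff_of_subset hs, α.2, γ.2]; omega
    obtain ⟨x, y, hxy, hsd⟩ := Finset.card_eq_two.mp h2
    have hxγ : x ∈ γ.1 \ α.1 := hsd ▸ (by simp)
    have hyγ : y ∈ γ.1 \ α.1 := hsd ▸ (by simp)
    have hxa : x ∉ α.1 := (Finset.mem_sdiff.mp hxγ).2
    have hya : y ∉ α.1 := (Finset.mem_sdiff.mp hyγ).2
    have hγeq : γ.1 = insert y (insert x α.1) := by
      have := Finset.union_sdiff_of_subset hs
      rw [hsd] at this
      rw [← this]; ext z; simp; try tauto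
    have hγeq' : γ.1 = insert x (insert y α.1) := by
      rw [hγeq]; ext z; simp; try tauto
    have hxins : x ∉ insert y α.1 := by simp [hxy, hxa]
    have hyins : y ∉ insert x α.1 := by simp [Ne.symm hxy, hya]
    have hc1 : (insert x α.1).card = d + 1 := by
      rw [Finset.card_insert_of_notMem hxa, α.2]
    have hc2 : (insert y α.1).card = d + 1 := by
      rw [Finset.card_insert_of_notMem hya, α.2]
    set β₁ : {s : Finset (Fin n) // s.card = d + 1} := ⟨insert x α.1, hc1⟩
    set β₂ : {s : Finset (Fin n) // s.card = d + 1} := ⟨insert y α.1, hc2⟩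
    have hne : β₁ ≠ β₂ := by
      intro h
      apply hxy
      have hv : insert x α.1 = insert y α.1 := congrArg Subtype.val h
      have : x ∈ insert y α.1 := hv ▸ Finset.mem_insert_self x α.1
      rcases Finset.mem_insert.mp this with h' | h'
      · exact h'
      · exact absurd h' hxa
    have hsum : ∑ β, Wj n d α β * Wj n (d+1) β γ
        = ∑ β ∈ ({β₁, β₂} : Finset _), Wj n d α β * Wj n (d+1) β γ := by
      symm
      apply Finset.sum_subset (Finset.subset_univ _)
      intro β _ hβ
      by_cases h1 : α.1 ⊆ β.1
      · by_cases h2' : β.1 ⊆ γ.1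
        · -- then β must be β₁ or β₂
          exfalso
          obtain ⟨z, hz, hβz⟩ := exists_insert_of_subset (by rw [β.2, α.2]) h1
          have hzsd : z ∈ γ.1 \ α.1 := by
            rw [Finset.mem_sdiff]
            exact ⟨h2' (hβz ▸ Finset.mem_insert_self z α.1), hz⟩
          rw [hsd] at hzsd
          apply hβ
          simp only [Finset.mem_insert, Finset.mem_singleton]
          rcases Finset.mem_insert.mp hzsd with rfl | hz'
          · left; exact Subtype.ext hβz
          · right; rw [Finset.mem_singleton] at hz'; subst hz'; exact Subtype.ext hβz
        · rw [Wj_ne _ _ h2', mul_zero]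
      · rw [Wj_ne _ _ h1, zero_mul]
    rw [hsum, Finset.sum_pair hne]
    -- now compute the four W values
    rw [Wj_eq α β₁ x hxa rfl, Wj_eq α β₂ y hya rfl,
        Wj_eq β₁ γ y hyins hγeq, Wj_eq β₂ γ x hxins hγeq']
    rw [← pow_add, ← pow_add]
    apply neg_one_pow_add_eq_zero
    have hpar := key_parity α.1 x y hxa hya hxy
    obtain ⟨k, hk⟩ := hpar
    refine ⟨k, ?_⟩
    have hγ2 : γ.1 = insert y (insert x α.1) := hγeq
    rw [hγeq]
    rw [hγeq'] at hγ2
    show (Finset.filter (fun z => z < x) (insert x α.1)).card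
        + (Finset.filter (fun z => z < y) (insert y (insert x α.1))).card
        + ((Finset.filter (fun z => z < y) (insert y α.1)).card
        + (Finset.filter (fun z => z < x) (insert y (insert x α.1))).card) = 2 * k + 1
    omega
  · apply Finset.sum_eq_zero
    intro β _
    by_cases h1 : α.1 ⊆ β.1
    · by_cases h2' : β.1 ⊆ γ.1
      · exact absurd (h1.trans h2') hs
      · rw [Wj_ne _ _ h2', mul_zero]
    · rw [Wj_ne _ _ h1, zero_mul]

lemma Wj_sq {n d : ℕ} (α : {s : Finset (Fin n) // s.card = d})
    (β : {s : Finset (Fin n) // s.card = d + 1}) :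
    Wj n d α β * Wj n d α β = if α.1 ⊆ β.1 then (1 : ℝ) else 0 := by
  rw [Wj]
  split_ifs with h
  · rw [← pow_add]
    exact Even.neg_one_pow ⟨_, rfl⟩
  · ring

lemma card_sub {n d : ℕ} (β : {s : Finset (Fin n) // s.card = d + 1}) :
    (Finset.univ.filter (fun α : {s : Finset (Fin n) // s.card = d} => α.1 ⊆ β.1)).card
      = d + 1 := by
  have key : β.1.card = (Finset.univ.filter (fun α : {s : Finset (Fin n) // s.card = d} => α.1 ⊆ β.1)).card := by
    apply Finset.card_bij (fun (z : Fin n) (hz : z ∈ β.1) =>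
      (⟨β.1.erase z, by rw [Finset.card_erase_of_mem hz, β.2]; rfl⟩ :
        {s : Finset (Fin n) // s.card = d}))
    · intro z hz
      simp only [Finset.mem_filter, Finset.mem_univ, true_and]
      exact Finset.erase_subset z β.1
    · intro z hz z' hz' h
      have hv : β.1.erase z = β.1.erase z' := congrArg Subtype.val h
      by_contra hne
      have hm : z ∈ β.1.erase z' := Finset.mem_erase.mpr ⟨hne, hz⟩
      rw [← hv] at hm
      exact Finset.notMem_erase z β.1 hm
    · intro α hα
      simp only [Finset.mem_filter, Finset.mem_univ, true_and] at hα
      have h1 : (β.1 \ α.1).card = 1 := by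
        rw [Finset.card_sdiff_of_subset hα, α.2, β.2]; omega
      obtain ⟨z, hz⟩ := Finset.card_eq_one.mp h1
      have hzm : z ∈ β.1 \ α.1 := hz ▸ Finset.mem_singleton_self z
      refine ⟨z, (Finset.mem_sdiff.mp hzm).1, ?_⟩
      apply Subtype.ext
      show β.1.erase z = α.1
      rw [← Finset.sdiff_singleton_eq_erase, ← hz]
      exact Finset.sdiff_sdiff_eq_self hα
  rw [β.2] at key
  exact key.symm

lemma card_sup {n d : ℕ} (β : {s : Finset (Fin n) // s.card = d + 1}) :
    (Finset.univ.filter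
      (fun γ : {s : Finset (Fin n) // s.card = d + 1 + 1} => β.1 ⊆ γ.1)).card
      = n - (d + 1) := by
  have : (β.1ᶜ).card = n - (d + 1) := by
    rw [Finset.card_compl, β.2, Fintype.card_fin]
  rw [← this]
  refine (Finset.card_bij (fun (z : Fin n) (hz : z ∈ β.1ᶜ) =>
    (⟨insert z β.1, by
      rw [Finset.card_insert_of_notMem (Finset.mem_compl.mp hz), β.2]⟩ :
      {s : Finset (Fin n) // s.card = d + 1 + 1})) ?_ ?_ ?_).symm
  · intro z hz
    simp only [Finset.mem_filter, Finset.mem_univ, true_and]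
    exact Finset.subset_insert z β.1
  · intro z hz z' hz' h
    have hv : insert z β.1 = insert z' β.1 := congrArg Subtype.val h
    have : z ∈ insert z' β.1 := hv ▸ Finset.mem_insert_self z β.1
    rcases Finset.mem_insert.mp this with h' | h'
    · exact h'
    · exact absurd h' (Finset.mem_compl.mp hz)
  · intro γ hγ
    simp only [Finset.mem_filter, Finset.mem_univ, true_and] at hγ
    obtain ⟨z, hz, hγz⟩ := exists_insert_of_subset (by rw [γ.2, β.2]) hγ
    exact ⟨z, Finset.mem_compl.mpr hz, Subtype.ext hγz.symm⟩

lemma lemB (n d : ℕ) :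
    (Wj n d)ᵀ * Wj n d + Wj n (d + 1) * (Wj n (d + 1))ᵀ
      = (n : ℝ) • (1 : Matrix {s : Finset (Fin n) // s.card = d + 1}
          {s : Finset (Fin n) // s.card = d + 1} ℝ) := by
  ext β β'
  simp only [Matrix.add_apply, Matrix.mul_apply, Matrix.transpose_apply,
    Matrix.smul_apply, Matrix.one_apply, smul_eq_mul]
  by_cases hbb : β = β'
  · subst hbb
    rw [if_pos rfl, mul_one]
    have hle : d + 1 ≤ n := by
      have := Finset.card_le_univ β.1
      rwa [β.2, Fintype.card_fin] at this
    have hsum1 : ∑ α, Wj n d α β * Wj n d α β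
        = ((d : ℝ) + 1) := by
      have : ∀ α : {s : Finset (Fin n) // s.card = d},
          Wj n d α β * Wj n d α β = if α.1 ⊆ β.1 then (1 : ℝ) else 0 :=
        fun α => Wj_sq α β
      rw [Finset.sum_congr rfl (fun α _ => this α), Finset.sum_boole, card_sub]
      push_cast; ring
    have hsum2 : ∑ γ, Wj n (d + 1) β γ * Wj n (d + 1) β γ
        = ((n : ℝ) - (d + 1)) := by
      have : ∀ γ : {s : Finset (Fin n) // s.card = d + 1 + 1},
          Wj n (d + 1) β γ * Wj n (d + 1) β γ = if β.1 ⊆ γ.1 then (1 : ℝ) else 0 :=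
        fun γ => Wj_sq β γ
      rw [Finset.sum_congr rfl (fun γ _ => this γ), Finset.sum_boole, card_sup]
      rw [Nat.cast_sub hle]
      push_cast; ring
    rw [hsum1, hsum2]; ring
  · rw [if_neg hbb, mul_zero]
    have hcap_lt : (β.1 ∩ β'.1).card < d + 1 := by
      rcases lt_or_eq_of_le (le_trans (Finset.card_le_card Finset.inter_subset_left)
        (le_of_eq β.2)) with h | h
      · exact h
      · exfalso
        apply hbb
        apply Subtype.ext
        have h1 : β.1 ∩ β'.1 = β.1 :=
          Finset.eq_of_subset_of_card_le Finset.inter_subset_left (by rw [h, β.2])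
        have h2 : β.1 ∩ β'.1 = β'.1 :=
          Finset.eq_of_subset_of_card_le Finset.inter_subset_right (by rw [h, β'.2])
        exact h1 ▸ h2
    by_cases hcard : (β.1 ∩ β'.1).card = d
    · -- single surviving term in each sum; they cancel
      set I := β.1 ∩ β'.1 with hI
      have hIβ : I ⊆ β.1 := Finset.inter_subset_left
      have hIβ' : I ⊆ β'.1 := Finset.inter_subset_right
      obtain ⟨x, hxI, hβx⟩ := exists_insert_of_subset (by rw [β.2, hcard]) hIβ
      obtain ⟨y, hyI, hβ'y⟩ := exists_insert_of_subset (by rw [β'.2, hcard]) hIβ'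
      have hxy : x ≠ y := by
        intro h
        subst h
        apply hxI
        rw [hI, Finset.mem_inter]
        exact ⟨hβx ▸ Finset.mem_insert_self _ _, hβ'y ▸ Finset.mem_insert_self _ _⟩
      have hyins : y ∉ insert x I := by
        simp only [Finset.mem_insert]
        rintro (rfl | h)
        · exact hxy rfl
        · exact hyI h
      have hγ0c : (insert y (insert x I)).card = d + 1 + 1 := by
        rw [Finset.card_insert_of_notMem hyins, Finset.card_insert_of_notMem hxI, hcard]
      set α₀ : {s : Finset (Fin n) // s.card = d} := ⟨I, hcard⟩ with hα₀
      set γ₀ : {s : Finset (Fin n) // s.card = d + 1 + 1} := ⟨insert y (insert x I), hγ0c⟩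
        with hγ₀
      have hα0v : α₀.1 = I := rfl
      have hγ0v : γ₀.1 = insert y (insert x I) := rfl
      have hyβ : y ∉ β.1 := by rw [hβx]; exact hyins
      have hxβ' : x ∉ β'.1 := by
        rw [hβ'y]
        simp only [Finset.mem_insert]
        rintro (rfl | h)
        · exact hxy rfl
        · exact hxI h
      have hγy : γ₀.1 = insert y β.1 := by rw [hγ0v, hβx]
      have hγx : γ₀.1 = insert x β'.1 := by
        rw [hγ0v, hβ'y]; ext z; simp; try tauto
      have hucard : (β.1 ∪ β'.1).card = d + 1 + 1 := by
        have hcu := Finset.card_union_add_card_inter β.1 β'.1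
        rw [β.2, β'.2, ← hI, hcard] at hcu
        omega
      have huγ : β.1 ∪ β'.1 = γ₀.1 := by
        rw [hγ0v, hβx, hβ'y]; ext z; simp; try tauto
      have hsum1 : ∑ α, Wj n d α β * Wj n d α β' = Wj n d α₀ β * Wj n d α₀ β' := by
        apply Finset.sum_eq_single α₀
        · intro α _ hne
          by_cases h1 : α.1 ⊆ β.1
          · by_cases h2 : α.1 ⊆ β'.1
            · exfalso
              apply hne
              apply Subtype.ext
              exact Finset.eq_of_subset_of_card_le (Finset.subset_inter h1 h2)
                (by rw [α.2, hcard])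
            · rw [Wj_ne _ _ h2, mul_zero]
          · rw [Wj_ne _ _ h1, zero_mul]
        · intro h
          exact absurd (Finset.mem_univ _) h
      have hsum2 : ∑ γ, Wj n (d + 1) β γ * Wj n (d + 1) β' γ
          = Wj n (d + 1) β γ₀ * Wj n (d + 1) β' γ₀ := by
        apply Finset.sum_eq_single γ₀
        · intro γ _ hne
          by_cases h1 : β.1 ⊆ γ.1
          · by_cases h2 : β'.1 ⊆ γ.1
            · exfalso
              apply hne
              apply Subtype.ext
              have hu : β.1 ∪ β'.1 ⊆ γ.1 := Finset.union_subset h1 h2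
              have := Finset.eq_of_subset_of_card_le hu (by rw [γ.2, hucard])
              rw [← huγ, ← this]
            · rw [Wj_ne _ _ h2, mul_zero]
          · rw [Wj_ne _ _ h1, zero_mul]
        · intro h
          exact absurd (Finset.mem_univ _) h
      rw [hsum1, hsum2,
        Wj_eq α₀ β x hxI (by rw [hβx, hα0v]),
        Wj_eq α₀ β' y hyI (by rw [hβ'y, hα0v]),
        Wj_eq β γ₀ y hyβ hγy, Wj_eq β' γ₀ x hxβ' hγx,
        ← pow_add, ← pow_add]
      apply neg_one_pow_add_eq_zero
      obtain ⟨k, hk⟩ := key_parity I x y hxI hyI hxy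
      refine ⟨k, ?_⟩
      rw [hβx, hβ'y, hγ0v]
      omega
    · -- both sums vanish
      have hlt : (β.1 ∩ β'.1).card < d := by omega
      have hz1 : ∑ α, Wj n d α β * Wj n d α β' = 0 := by
        apply Finset.sum_eq_zero
        intro α _
        by_cases h1 : α.1 ⊆ β.1
        · by_cases h2 : α.1 ⊆ β'.1
          · exfalso
            have : α.1 ⊆ β.1 ∩ β'.1 := Finset.subset_inter h1 h2
            have := Finset.card_le_card this
            rw [α.2] at this; omega
          · rw [Wj_ne _ _ h2, mul_zero]
        · rw [Wj_ne _ _ h1, zero_mul]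
      have hz2 : ∑ γ, Wj n (d + 1) β γ * Wj n (d + 1) β' γ = 0 := by
        apply Finset.sum_eq_zero
        intro γ _
        by_cases h1 : β.1 ⊆ γ.1
        · by_cases h2 : β'.1 ⊆ γ.1
          · exfalso
            have hu : β.1 ∪ β'.1 ⊆ γ.1 := Finset.union_subset h1 h2
            have hcu := Finset.card_union_add_card_inter β.1 β'.1
            have := Finset.card_le_card hu
            rw [β.2, β'.2] at hcu
            rw [γ.2] at this
            omega
          · rw [Wj_ne _ _ h2, mul_zero]
        · rw [Wj_ne _ _ h1, zero_mul]
      rw [hz1, hz2]; ring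

/-- For all integers `d ≥ 1` and `n ≥ d + 1`, with
`P_{n,d} := W_{n,d}·W_{n,d}ᵀ`, one has `P_{n,d}·W_{n,d} = n·W_{n,d}` and
`P_{n,d}·W_{n,d−1}ᵀ = 0`.  (Stated with `d` replaced by `d + 1`.) -/
theorem stmt_8 (n d : ℕ) (hn : d + 2 ≤ n) :
    Pj n (d + 1) * Wj n (d + 1) = (n : ℝ) • Wj n (d + 1) ∧
    Pj n (d + 1) * (Wj n d)ᵀ = 0 := by
  constructor
  · have hB := lemB n (d + 1)
    have hA := lemA n (d + 1)
    have hsub : (Wj n (d + 1))ᵀ * Wj n (d + 1)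
        = (n : ℝ) • 1 - Wj n (d + 1 + 1) * (Wj n (d + 1 + 1))ᵀ :=
      eq_sub_of_add_eq hB
    calc Pj n (d + 1) * Wj n (d + 1)
        = Wj n (d + 1) * ((Wj n (d + 1))ᵀ * Wj n (d + 1)) := by
          rw [Pj, Matrix.mul_assoc]
      _ = Wj n (d + 1) * ((n : ℝ) • 1 - Wj n (d + 1 + 1) * (Wj n (d + 1 + 1))ᵀ) := by
          rw [hsub]
      _ = (n : ℝ) • Wj n (d + 1)
            - (Wj n (d + 1) * Wj n (d + 1 + 1)) * (Wj n (d + 1 + 1))ᵀ := by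
          rw [Matrix.mul_sub, Matrix.mul_smul, Matrix.mul_one, Matrix.mul_assoc]
      _ = (n : ℝ) • Wj n (d + 1) := by rw [hA, Matrix.zero_mul, sub_zero]
  · have hA := lemA n d
    calc Pj n (d + 1) * (Wj n d)ᵀ
        = Wj n (d + 1) * (Wj n d * Wj n (d + 1))ᵀ := by
          rw [Pj, Matrix.mul_assoc, ← Matrix.transpose_mul]
      _ = 0 := by rw [hA, Matrix.transpose_zero, Matrix.mul_zero]
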